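/- The sum $(F,Y)\mapsto \tfrac{\alpha}{2}K_0\operatorname{tr}(F Y^{-1/2} F^\top) + \tfrac{e_R}{2}\|Y\|^2$ with constants $\alpha, K_0, e_R > 0$ is strictly convex on $\mathbb{R}^{3\times3}\times\mathcal{S}^3_{>0}$, where $\|\cdot\|$ is the Frobenius norm. -/

import Mathlib

open Matrix Set

open scoped Classical in
/-- The inverse of the unique symmetric positive-semidefinite square root of `Y`
(junk value `0` when `Y` is not positive semidefinite). -/
noncomputable def invSqrt (Y : Matrix (Fin 3) (Fin 3) ℝ) : Matrix (Fin 3) (Fin 3) ℝ :=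
  if h : Y.PosSemidef then (h.1.eigenvectorUnitary.1 * diagonal ((↑) ∘ (√·) ∘ h.1.eigenvalues) *
    (star h.1.eigenvectorUnitary : Matrix (Fin 3) (Fin 3) ℝ))⁻¹ else 0

namespace Matrix.PosSemidef

open scoped Classical in
/-- The symmetric positive-semidefinite square root of a PSD matrix. -/
noncomputable def sqrt {Y : Matrix (Fin 3) (Fin 3) ℝ} (h : Y.PosSemidef) :
    Matrix (Fin 3) (Fin 3) ℝ :=
  h.1.eigenvectorUnitary.1 * diagonal ((↑) ∘ (√·) ∘ h.1.eigenvalues) *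
    (star h.1.eigenvectorUnitary : Matrix (Fin 3) (Fin 3) ℝ)

lemma posSemidef_sqrt {Y : Matrix (Fin 3) (Fin 3) ℝ} (h : Y.PosSemidef) : h.sqrt.PosSemidef := by
  unfold sqrt
  have hD : (diagonal ((↑) ∘ (√·) ∘ h.1.eigenvalues : Fin 3 → ℝ)).PosSemidef := by
    rw [Matrix.posSemidef_diagonal_iff]
    intro i
    simp [Real.sqrt_nonneg]
  rw [Matrix.star_eq_conjTranspose]
  exact hD.mul_mul_conjTranspose_same (h.1.eigenvectorUnitary.1)

lemma sqrt_mul_self {Y : Matrix (Fin 3) (Fin 3) ℝ} (h : Y.PosSemidef) : h.sqrt * h.sqrt = Y := by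
  unfold sqrt
  set U := h.1.eigenvectorUnitary
  have hU : (star U : Matrix (Fin 3) (Fin 3) ℝ) * U.1 = 1 := Unitary.coe_star_mul_self U
  have hDD : diagonal ((↑) ∘ (√·) ∘ h.1.eigenvalues : Fin 3 → ℝ) *
      diagonal ((↑) ∘ (√·) ∘ h.1.eigenvalues : Fin 3 → ℝ)
      = diagonal (RCLike.ofReal ∘ h.1.eigenvalues) := by
    rw [Matrix.diagonal_mul_diagonal]
    congr 1; funext i
    simp [Real.mul_self_sqrt (h.eigenvalues_nonneg i)]
  calc U.1 * diagonal ((↑) ∘ (√·) ∘ h.1.eigenvalues) * (star U : Matrix (Fin 3) (Fin 3) ℝ) *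
        (U.1 * diagonal ((↑) ∘ (√·) ∘ h.1.eigenvalues) * (star U : Matrix (Fin 3) (Fin 3) ℝ))
      = U.1 * (diagonal ((↑) ∘ (√·) ∘ h.1.eigenvalues) * ((star U : Matrix (Fin 3) (Fin 3) ℝ) *
        U.1) * diagonal ((↑) ∘ (√·) ∘ h.1.eigenvalues)) * (star U : Matrix (Fin 3) (Fin 3) ℝ) := by
        simp only [Matrix.mul_assoc]
    _ = Y := by
        rw [hU, Matrix.mul_one, hDD]
        conv_rhs => rw [h.1.spectral_theorem]
        rfl

end Matrix.PosSemidef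


section Aux
variable {A B S T F Z Y₁ Y₂ : Matrix (Fin 3) (Fin 3) ℝ}



lemma quadform_nonneg (hA : A.PosSemidef) (x : Fin 3 → ℝ) : 0 ≤ x ⬝ᵥ A *ᵥ x := by
  simpa using hA.dotProduct_mulVec_nonneg x

lemma col_dot (A Z : Matrix (Fin 3) (Fin 3) ℝ) (j : Fin 3) :
    (Zᵀ * A * Z) j j = (fun i => Z i j) ⬝ᵥ A *ᵥ (fun i => Z i j) := by
  simp only [Matrix.mul_apply, Matrix.transpose_apply, dotProduct, Matrix.mulVec, Finset.sum_mul,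
    Finset.mul_sum]
  rw [Finset.sum_comm]
  apply Finset.sum_congr rfl; intro i _
  apply Finset.sum_congr rfl; intro k _
  ring

lemma trace_quad_nonneg (hA : A.PosSemidef) (Z : Matrix (Fin 3) (Fin 3) ℝ) :
    0 ≤ (Zᵀ * A * Z).trace := by
  rw [Matrix.trace]
  refine Finset.sum_nonneg fun j _ => ?_
  rw [Matrix.diag_apply, col_dot]
  exact quadform_nonneg hA _

lemma trace_quad_pos (hA : A.PosDef) (hZ : Z ≠ 0) : 0 < (Zᵀ * A * Z).trace := by
  obtain ⟨i, j, hij⟩ : ∃ i j, Z i j ≠ 0 := by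
    by_contra h; push_neg at h; exact hZ (by ext i j; simpa using h i j)
  rw [Matrix.trace]
  refine Finset.sum_pos' (fun k _ => ?_) ⟨j, Finset.mem_univ j, ?_⟩
  · rw [Matrix.diag_apply, col_dot]; exact quadform_nonneg hA.posSemidef _
  · rw [Matrix.diag_apply, col_dot]
    have hx : (fun i => Z i j) ≠ 0 := fun h => hij (congrFun h i)
    simpa using hA.dotProduct_mulVec_pos hx





lemma sym_of_posSemidef (hA : A.PosSemidef) : Aᵀ = A := by
  have := hA.1
  rwa [Matrix.IsHermitian, conjTranspose_eq_transpose_of_trivial] at this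

lemma inv_transpose_of_posDef (hA : A.PosDef) : (A⁻¹)ᵀ = A⁻¹ := by
  rw [Matrix.transpose_nonsing_inv, sym_of_posSemidef hA.posSemidef]

lemma isUnit_det_of_posDef (hA : A.PosDef) : IsUnit A.det :=
  isUnit_iff_ne_zero.2 hA.det_pos.ne'

lemma lower_bound (hA : A.PosDef) (F Z : Matrix (Fin 3) (Fin 3) ℝ) :
    2 * (F * Z).trace - (Zᵀ * A * Z).trace ≤ (F * A⁻¹ * Fᵀ).trace := by
  set W : Matrix (Fin 3) (Fin 3) ℝ := A⁻¹ * Fᵀ - Z with hW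
  have h0 : 0 ≤ (Wᵀ * A * W).trace := trace_quad_nonneg hA.posSemidef W
  have hWT : Wᵀ = F * A⁻¹ - Zᵀ := by
    rw [hW, Matrix.transpose_sub, Matrix.transpose_mul, inv_transpose_of_posDef hA,
      Matrix.transpose_transpose]
  have hAi : A⁻¹ * A = 1 := Matrix.nonsing_inv_mul A (isUnit_det_of_posDef hA)
  have hiA : A * A⁻¹ = 1 := Matrix.mul_nonsing_inv A (isUnit_det_of_posDef hA)
  have expand : Wᵀ * A * W = F * A⁻¹ * Fᵀ - F * Z - Zᵀ * Fᵀ + Zᵀ * A * Z := by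
    rw [hWT, hW]
    have e1 : (F * A⁻¹ - Zᵀ) * A = F - Zᵀ * A := by
      rw [Matrix.sub_mul, Matrix.mul_assoc, hAi, Matrix.mul_one]
    rw [e1, Matrix.sub_mul, Matrix.mul_sub, Matrix.mul_sub]
    have e2 : Zᵀ * A * (A⁻¹ * Fᵀ) = Zᵀ * Fᵀ := by
      rw [Matrix.mul_assoc, ← Matrix.mul_assoc A, hiA, Matrix.one_mul]
    rw [e2, ← Matrix.mul_assoc]
    abel
  have htr : (Wᵀ * A * W).trace
      = (F * A⁻¹ * Fᵀ).trace - 2 * (F * Z).trace + (Zᵀ * A * Z).trace := by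
    rw [expand, Matrix.trace_add, Matrix.trace_sub, Matrix.trace_sub]
    have : (Zᵀ * Fᵀ).trace = (F * Z).trace := by
      rw [← Matrix.transpose_mul, Matrix.trace_transpose]
    rw [this]; ring
  linarith [h0, htr.symm.le, htr.le]

lemma equality_case (hA : A.PosDef) (F : Matrix (Fin 3) (Fin 3) ℝ) :
    (F * A⁻¹ * Fᵀ).trace
      = 2 * (F * (A⁻¹ * Fᵀ)).trace - ((A⁻¹ * Fᵀ)ᵀ * A * (A⁻¹ * Fᵀ)).trace := by
  have hAi : A⁻¹ * A = 1 := Matrix.nonsing_inv_mul A (isUnit_det_of_posDef hA)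
  have e3 : (A⁻¹ * Fᵀ)ᵀ * A * (A⁻¹ * Fᵀ) = F * A⁻¹ * Fᵀ := by
    rw [Matrix.transpose_mul, inv_transpose_of_posDef hA, Matrix.transpose_transpose]
    rw [Matrix.mul_assoc (F * A⁻¹), Matrix.mul_assoc F, ← Matrix.mul_assoc A⁻¹, hAi,
      Matrix.one_mul, ← Matrix.mul_assoc]
  rw [e3, ← Matrix.mul_assoc]; ring





/-- If `S, T` are PSD and `T² - S²` is PSD then `T - S` is PSD. -/
lemma sqrt_mono (hS : S.PosSemidef) (hT : T.PosSemidef)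
    (h : (T * T - S * S).PosSemidef) : (T - S).PosSemidef := by
  have hM : (T - S).IsHermitian := hT.1.sub hS.1
  apply hM.posSemidef_iff_eigenvalues_nonneg.2
  intro i
  by_contra hneg
  push_neg at hneg
  simp only [Pi.zero_apply] at hneg
  set lam := hM.eigenvalues i with hlam
  set v : Fin 3 → ℝ := ⇑(hM.eigenvectorBasis i) with hv
  have hv0 : v ≠ 0 := fun h0 => hM.eigenvectorBasis.orthonormal.ne_zero i ((WithLp.ofLp_eq_zero 2).1 h0)
  have hEv : (T - S) *ᵥ v = lam • v := hM.mulVec_eigenvectorBasis i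
  -- 0 ≤ v ⬝ (T² - S²) v = lam * (v⬝Tv + v⬝Sv)
  have hkey : v ⬝ᵥ (T * T - S * S) *ᵥ v = lam * (v ⬝ᵥ T *ᵥ v + v ⬝ᵥ S *ᵥ v) := by
    have hsplit : T * T - S * S = T * (T - S) + (T - S) * S := by noncomm_ring
    rw [hsplit]
    rw [Matrix.add_mulVec, dotProduct_add]
    have h1 : v ⬝ᵥ (T * (T - S)) *ᵥ v = lam * (v ⬝ᵥ T *ᵥ v) := by
      rw [← Matrix.mulVec_mulVec, hEv, Matrix.mulVec_smul, dotProduct_smul]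
      rfl
    have h2 : v ⬝ᵥ ((T - S) * S) *ᵥ v = lam * (v ⬝ᵥ S *ᵥ v) := by
      rw [← Matrix.mulVec_mulVec, Matrix.dotProduct_mulVec v (T - S)]
      have : v ᵥ* (T - S) = lam • v := by
        have hsym : (T - S)ᵀ = T - S := by
          have := hM; rwa [Matrix.IsHermitian, conjTranspose_eq_transpose_of_trivial] at this
        rw [← Matrix.mulVec_transpose, hsym, hEv]
      rw [this, smul_dotProduct, smul_eq_mul]
    rw [h1, h2]; ring
  have h0 : 0 ≤ lam * (v ⬝ᵥ T *ᵥ v + v ⬝ᵥ S *ᵥ v) := hkey ▸ quadform_nonneg h v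
  have hTv : 0 ≤ v ⬝ᵥ T *ᵥ v := quadform_nonneg hT v
  have hSv : 0 ≤ v ⬝ᵥ S *ᵥ v := quadform_nonneg hS v
  have hsum : v ⬝ᵥ T *ᵥ v + v ⬝ᵥ S *ᵥ v ≤ 0 := by
    by_contra hpos
    push_neg at hpos
    nlinarith
  have hT0 : v ⬝ᵥ T *ᵥ v = 0 := le_antisymm (by linarith) hTv
  have hS0 : v ⬝ᵥ S *ᵥ v = 0 := le_antisymm (by linarith) hSv
  have hTz : T *ᵥ v = 0 := by
    have := (hT.dotProduct_mulVec_zero_iff v).1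
    simp only [star_trivial] at this
    exact this hT0
  have hSz : S *ᵥ v = 0 := by
    have := (hS.dotProduct_mulVec_zero_iff v).1
    simp only [star_trivial] at this
    exact this hS0
  have : lam • v = 0 := by rw [← hEv, Matrix.sub_mulVec, hTz, hSz, sub_zero]
  rcases smul_eq_zero.1 this with h | h
  · exact absurd h (by linarith)
  · exact hv0 h




/-- sqrt of a positive definite matrix is positive definite -/
lemma posDef_sqrt (hY : Y₁.PosDef) : (hY.posSemidef).sqrt.PosDef := by
  set S := (hY.posSemidef).sqrt with hS
  refine Matrix.PosDef.of_dotProduct_mulVec_pos (hY.posSemidef).posSemidef_sqrt.1 (fun x hx => ?_)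
  rcases lt_or_eq_of_le ((hY.posSemidef).posSemidef_sqrt.dotProduct_mulVec_nonneg x) with h | h
  · simpa using h
  · exfalso
    have hSz : S *ᵥ x = 0 := by
      have := ((hY.posSemidef).posSemidef_sqrt.dotProduct_mulVec_zero_iff x).1
      simp only [star_trivial] at this
      exact this h.symm
    have hYz : Y₁ *ᵥ x = 0 := by
      rw [← (hY.posSemidef).sqrt_mul_self, ← Matrix.mulVec_mulVec, hSz, Matrix.mulVec_zero]
    have := hY.dotProduct_mulVec_pos hx
    rw [hYz] at this
    simp at this

lemma posSemidef_smul (hA : A.PosSemidef) {c : ℝ} (hc : 0 ≤ c) : (c • A).PosSemidef := by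
  refine Matrix.PosSemidef.of_dotProduct_mulVec_nonneg ?_ (fun x => ?_)
  · have := hA.1
    rw [Matrix.IsHermitian] at this ⊢
    rw [Matrix.conjTranspose_smul, this, star_trivial]
  · rw [Matrix.smul_mulVec, dotProduct_smul, smul_eq_mul]
    exact mul_nonneg hc (by simpa using hA.dotProduct_mulVec_nonneg x)

lemma posDef_conv (hA : A.PosDef) (hB : B.PosDef) {a b : ℝ} (ha : 0 ≤ a) (hb : 0 ≤ b)
    (hab : a + b = 1) : (a • A + b • B).PosDef := by
  refine Matrix.PosDef.of_dotProduct_mulVec_pos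
    ((posSemidef_smul hA.posSemidef ha).add (posSemidef_smul hB.posSemidef hb)).1
    (fun x hx => ?_)
  have h1 := hA.dotProduct_mulVec_pos hx
  have h2 := hB.dotProduct_mulVec_pos hx
  simp only [star_trivial] at h1 h2 ⊢
  rw [Matrix.add_mulVec, dotProduct_add, Matrix.smul_mulVec, Matrix.smul_mulVec,
    dotProduct_smul, dotProduct_smul, smul_eq_mul, smul_eq_mul]
  rcases eq_or_lt_of_le ha with h | h
  · have hb1 : b = 1 := by linarith
    rw [← h, hb1]; simpa using h2
  · nlinarith

/-- concavity of sqrt: sqrt(a Y₁ + b Y₂) - (a sqrt Y₁ + b sqrt Y₂) is PSD -/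
lemma sqrt_concave (hY₁ : Y₁.PosDef) (hY₂ : Y₂.PosDef) {a b : ℝ} (ha : 0 < a) (hb : 0 < b)
    (hab : a + b = 1) (hm : (a • Y₁ + b • Y₂).PosDef) :
    ((hm.posSemidef).sqrt - (a • (hY₁.posSemidef).sqrt + b • (hY₂.posSemidef).sqrt)).PosSemidef := by
  set S₁ := (hY₁.posSemidef).sqrt with hS₁
  set S₂ := (hY₂.posSemidef).sqrt with hS₂
  set Sm := (hm.posSemidef).sqrt with hSm
  have hS₁p : S₁.PosSemidef := (hY₁.posSemidef).posSemidef_sqrt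
  have hS₂p : S₂.PosSemidef := (hY₂.posSemidef).posSemidef_sqrt
  have hSp : (a • S₁ + b • S₂).PosSemidef :=
    (posSemidef_smul hS₁p ha.le).add (posSemidef_smul hS₂p hb.le)
  apply sqrt_mono hSp (hm.posSemidef).posSemidef_sqrt
  have hTT : Sm * Sm = a • Y₁ + b • Y₂ := (hm.posSemidef).sqrt_mul_self
  have hY1 : Y₁ = S₁ * S₁ := (hY₁.posSemidef).sqrt_mul_self.symm
  have hY2 : Y₂ = S₂ * S₂ := (hY₂.posSemidef).sqrt_mul_self.symm
  have hD : ((a * b) • ((S₁ - S₂) * (S₁ - S₂))).PosSemidef := by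
    apply posSemidef_smul _ (by positivity)
    have hsym : (S₁ - S₂)ᵀ = S₁ - S₂ := by
      have h1 := (hS₁p.1.sub hS₂p.1)
      rwa [Matrix.IsHermitian, conjTranspose_eq_transpose_of_trivial] at h1
    have := Matrix.posSemidef_conjTranspose_mul_self (S₁ - S₂)
    rwa [Matrix.conjTranspose_eq_transpose_of_trivial, hsym] at this
  have hEq : Sm * Sm - (a • S₁ + b • S₂) * (a • S₁ + b • S₂)
      = (a * b) • ((S₁ - S₂) * (S₁ - S₂)) := by
    rw [hTT, hY1, hY2]
    simp only [Matrix.add_mul, Matrix.mul_add, smul_mul_assoc, mul_smul_comm,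
      smul_smul, Matrix.sub_mul, Matrix.mul_sub, smul_sub]
    have hb' : b = 1 - a := by linarith
    subst hb'
    match_scalars <;> ring
  rw [hEq]; exact hD





lemma key_conv (hY₁ : Y₁.PosDef) (hY₂ : Y₂.PosDef) (F₁ F₂ : Matrix (Fin 3) (Fin 3) ℝ)
    {a b : ℝ} (ha : 0 < a) (hb : 0 < b) (hab : a + b = 1)
    (hm : (a • Y₁ + b • Y₂).PosDef) :
    ((a • F₁ + b • F₂) * (hm.posSemidef).sqrt⁻¹ * (a • F₁ + b • F₂)ᵀ).trace
      ≤ a * (F₁ * (hY₁.posSemidef).sqrt⁻¹ * F₁ᵀ).trace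
        + b * (F₂ * (hY₂.posSemidef).sqrt⁻¹ * F₂ᵀ).trace := by
  set S₁ := (hY₁.posSemidef).sqrt with hS₁
  set S₂ := (hY₂.posSemidef).sqrt with hS₂
  set Sm := (hm.posSemidef).sqrt with hSm
  set Fm := a • F₁ + b • F₂ with hFm
  have hSmPD : Sm.PosDef := posDef_sqrt hm
  have hS₁PD : S₁.PosDef := posDef_sqrt hY₁
  have hS₂PD : S₂.PosDef := posDef_sqrt hY₂
  set Z := Sm⁻¹ * Fmᵀ with hZ
  have heq : (Fm * Sm⁻¹ * Fmᵀ).trace = 2 * (Fm * Z).trace - (Zᵀ * Sm * Z).trace :=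
    equality_case hSmPD Fm
  have h1 := lower_bound hS₁PD F₁ Z
  have h2 := lower_bound hS₂PD F₂ Z
  have hconc := sqrt_concave hY₁ hY₂ ha hb hab hm
  have hmono : 0 ≤ (Zᵀ * (Sm - (a • S₁ + b • S₂)) * Z).trace := trace_quad_nonneg hconc Z
  have e1 : (Zᵀ * (Sm - (a • S₁ + b • S₂)) * Z).trace
      = (Zᵀ * Sm * Z).trace - a * (Zᵀ * S₁ * Z).trace - b * (Zᵀ * S₂ * Z).trace := by
    simp only [Matrix.mul_sub, Matrix.sub_mul, Matrix.mul_add, Matrix.add_mul,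
      mul_smul_comm, smul_mul_assoc, Matrix.trace_sub, Matrix.trace_add, Matrix.trace_smul,
      smul_eq_mul]
    ring
  have e2 : (Fm * Z).trace = a * (F₁ * Z).trace + b * (F₂ * Z).trace := by
    rw [hFm, Matrix.add_mul, Matrix.trace_add, smul_mul_assoc, smul_mul_assoc,
      Matrix.trace_smul, Matrix.trace_smul, smul_eq_mul, smul_eq_mul]
  nlinarith [mul_le_mul_of_nonneg_left h1 ha.le, mul_le_mul_of_nonneg_left h2 hb.le]






lemma quad_strict (hA : A.PosDef) {F₁ F₂ : Matrix (Fin 3) (Fin 3) ℝ} (hF : F₁ ≠ F₂)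
    {a b : ℝ} (ha : 0 < a) (hb : 0 < b) (hab : a + b = 1) :
    ((a • F₁ + b • F₂) * A * (a • F₁ + b • F₂)ᵀ).trace
      < a * (F₁ * A * F₁ᵀ).trace + b * (F₂ * A * F₂ᵀ).trace := by
  have hZ : (F₁ - F₂)ᵀ ≠ 0 := by
    intro h
    apply hF
    have := congrArg Matrix.transpose h
    rw [Matrix.transpose_transpose, Matrix.transpose_zero] at this
    exact sub_eq_zero.1 this
  have hpos : 0 < (((F₁ - F₂)ᵀ)ᵀ * A * (F₁ - F₂)ᵀ).trace := trace_quad_pos hA hZ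
  rw [Matrix.transpose_transpose] at hpos
  have hid : a * (F₁ * A * F₁ᵀ).trace + b * (F₂ * A * F₂ᵀ).trace
      - ((a • F₁ + b • F₂) * A * (a • F₁ + b • F₂)ᵀ).trace
      = (a * b) * ((F₁ - F₂) * A * (F₁ - F₂)ᵀ).trace := by
    simp only [Matrix.add_mul, Matrix.mul_add, Matrix.sub_mul, Matrix.mul_sub,
      Matrix.transpose_add, Matrix.transpose_sub, Matrix.transpose_smul,
      smul_mul_assoc, mul_smul_comm, Matrix.trace_add, Matrix.trace_sub, Matrix.trace_smul,
      smul_eq_mul, smul_smul]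
    have hb' : b = 1 - a := by linarith
    subst hb'
    ring
  nlinarith [mul_pos ha hb, hpos, hid, mul_pos (mul_pos ha hb) hpos]
lemma sum_sq_strict (hY : Y₁ ≠ Y₂) {a b : ℝ} (ha : 0 < a) (hb : 0 < b) (hab : a + b = 1) :
    ∑ i, ∑ j, ((a • Y₁ + b • Y₂) i j) ^ 2
      < a * ∑ i, ∑ j, (Y₁ i j) ^ 2 + b * ∑ i, ∑ j, (Y₂ i j) ^ 2 := by
  have key : ∀ i j, ((a • Y₁ + b • Y₂) i j) ^ 2
      = a * (Y₁ i j) ^ 2 + b * (Y₂ i j) ^ 2 - a * b * (Y₁ i j - Y₂ i j) ^ 2 := by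
    intro i j
    simp only [Matrix.add_apply, Matrix.smul_apply, smul_eq_mul]
    have hb' : b = 1 - a := by linarith
    subst hb'
    ring
  have hsum : ∑ i, ∑ j, ((a • Y₁ + b • Y₂) i j) ^ 2
      = a * (∑ i, ∑ j, (Y₁ i j) ^ 2) + b * (∑ i, ∑ j, (Y₂ i j) ^ 2)
        - a * b * ∑ i, ∑ j, (Y₁ i j - Y₂ i j) ^ 2 := by
    simp only [key, Finset.sum_sub_distrib, Finset.sum_add_distrib, ← Finset.mul_sum]
  have hpos : 0 < ∑ i, ∑ j, (Y₁ i j - Y₂ i j) ^ 2 := by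
    obtain ⟨i, j, hij⟩ : ∃ i j, Y₁ i j ≠ Y₂ i j := by
      by_contra h
      push_neg at h
      exact hY (by ext i j; exact h i j)
    refine Finset.sum_pos' (fun k _ => Finset.sum_nonneg fun l _ => sq_nonneg _)
      ⟨i, Finset.mem_univ i, ?_⟩
    refine Finset.sum_pos' (fun l _ => sq_nonneg _) ⟨j, Finset.mem_univ j, ?_⟩
    exact lt_of_le_of_ne (sq_nonneg _) (Ne.symm (pow_ne_zero 2 (sub_ne_zero.2 hij)))
  nlinarith [hsum, hpos, mul_pos ha hb, mul_pos (mul_pos ha hb) hpos]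


end Aux

/-- For constants `α, K₀, e_R > 0`, the map
`(F, Y) ↦ (α/2) K₀ tr(F Y^{-1/2} Fᵀ) + (e_R/2) ‖Y‖²` (squared Frobenius norm)
is strictly convex on `ℝ^{3×3} × 𝒮³₊`. -/
theorem stmt8 (α K₀ eR : ℝ) (hα : 0 < α) (hK : 0 < K₀) (heR : 0 < eR) :
    StrictConvexOn ℝ
      {P : Matrix (Fin 3) (Fin 3) ℝ × Matrix (Fin 3) (Fin 3) ℝ | P.2.PosDef}
      (fun P => α / 2 * K₀ * (P.1 * invSqrt P.2 * P.1ᵀ).trace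
        + eR / 2 * ∑ i, ∑ j, (P.2 i j) ^ 2) := by
  have hc₁ : 0 < α / 2 * K₀ := by positivity
  have hc₂ : 0 < eR / 2 := by positivity
  constructor
  · intro x hx y hy a b ha hb hab
    simp only [Set.mem_setOf_eq] at hx hy ⊢
    exact posDef_conv hx hy ha hb hab
  · rintro ⟨F₁, Y₁⟩ hx ⟨F₂, Y₂⟩ hy hxy a b ha hb hab
    simp only [Set.mem_setOf_eq] at hx hy
    have hmPD : (a • Y₁ + b • Y₂).PosDef := posDef_conv hx hy ha.le hb.le hab
    simp only [Prod.smul_mk, Prod.mk_add_mk, smul_eq_mul]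
    have i1 : invSqrt Y₁ = (hx.posSemidef).sqrt⁻¹ := by
      unfold invSqrt; rw [dif_pos hx.posSemidef]; rfl
    have i2 : invSqrt Y₂ = (hy.posSemidef).sqrt⁻¹ := by
      unfold invSqrt; rw [dif_pos hy.posSemidef]; rfl
    by_cases hY : Y₁ = Y₂
    · subst hY
      have hF : F₁ ≠ F₂ := by
        intro h; exact hxy (by rw [h])
      have hYm : a • Y₁ + b • Y₁ = Y₁ := by rw [← add_smul, hab, one_smul]
      rw [hYm, i1]
      have hApd : ((hx.posSemidef).sqrt⁻¹).PosDef := (posDef_sqrt hx).inv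
      have hstrict := quad_strict hApd hF ha hb hab
      have hQ : a * (eR / 2 * ∑ i, ∑ j, (Y₁ i j) ^ 2) + b * (eR / 2 * ∑ i, ∑ j, (Y₁ i j) ^ 2)
          = eR / 2 * ∑ i, ∑ j, (Y₁ i j) ^ 2 := by rw [← add_mul, hab, one_mul]
      linarith [hQ, mul_lt_mul_of_pos_left hstrict hc₁]
    · have im : invSqrt (a • Y₁ + b • Y₂) = (hmPD.posSemidef).sqrt⁻¹ := by
        unfold invSqrt; rw [dif_pos hmPD.posSemidef]; rfl
      rw [im, i1, i2]
      have h1 := key_conv hx hy F₁ F₂ ha hb hab hmPD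
      have h2 := sum_sq_strict hY ha hb hab
      linarith [mul_le_mul_of_nonneg_left h1 hc₁.le, mul_lt_mul_of_pos_left h2 hc₂]
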